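/- Let n ≥ 3, let V = {0,1,…,n−1} with the natural order, and let Q be a partial quasi-pairing of V. If there exists v ∈ V such that {v, v+1} ∈ Q and v̂_Q ∉ {v, v+1}, then {v, v+1} is a nontrivial module of Inv(underline(n), Q); in particular, Inv(underline(n), Q) is decomposable. -/

import Mathlib

open Set

/-- The arc relation of the tournament `Inv(underline(V), P)` obtained from the
transitive tournament on a linearly ordered type by reversing the arcs `(x,y)`
with `{x,y} ∈ P`. -/
def InvArc {α : Type*} [LinearOrder α] (P : Set (Set α)) (x y : α) : Prop :=
  (x < y ∧ ({x, y} : Set α) ∉ P) ∨ (y < x ∧ ({x, y} : Set α) ∈ P)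

/-- `M` is a module of the subtournament of `Inv(·, P)` induced on the vertex set `W`. -/
def IsModuleOn {α : Type*} [LinearOrder α] (P : Set (Set α)) (W M : Set α) : Prop :=
  M ⊆ W ∧ ∀ v ∈ W, v ∉ M →
    (∀ x ∈ M, InvArc P v x) ∨ (∀ x ∈ M, InvArc P x v)

/-- A subset of the vertex set `W` is trivial if it is empty, a singleton, or all of `W`. -/
def IsTrivialSubset {α : Type*} (W M : Set α) : Prop :=
  M = ∅ ∨ (∃ a, M = {a}) ∨ M = W

/-- A nontrivial module of the tournament `Inv(·, P)` induced on `W`. -/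
def IsNontrivialModuleOn {α : Type*} [LinearOrder α] (P : Set (Set α)) (W M : Set α) : Prop :=
  IsModuleOn P W M ∧ ¬ IsTrivialSubset W M

/-- The tournament `Inv(·, P)` induced on `W` is indecomposable: all its modules are trivial. -/
def IndecomposableOn {α : Type*} [LinearOrder α] (P : Set (Set α)) (W : Set α) : Prop :=
  ∀ M : Set α, IsModuleOn P W M → IsTrivialSubset W M

/-- The tournament `Inv(·, P)` induced on `W` is decomposable: it has a nontrivial module. -/
def DecomposableOn {α : Type*} [LinearOrder α] (P : Set (Set α)) (W : Set α) : Prop :=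
  ∃ M : Set α, IsNontrivialModuleOn P W M

/-- A co-module of the tournament `Inv(·, P)` on `W`: a subset `M` of `W` such that
`M` or `W ∖ M` is a nontrivial module. -/
def IsCoModuleOn {α : Type*} [LinearOrder α] (P : Set (Set α)) (W M : Set α) : Prop :=
  M ⊆ W ∧ (IsNontrivialModuleOn P W M ∨ IsNontrivialModuleOn P W (W \ M))

/-- `mc(underline(W))`: the family of minimal co-modules of the transitive tournament on `W`
(a minimal co-module contains no other co-module). -/
def mcOn {α : Type*} [LinearOrder α] (W : Set α) : Set (Set α) :=
  {M | IsCoModuleOn (∅ : Set (Set α)) W M ∧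
    ∀ C : Set α, IsCoModuleOn (∅ : Set (Set α)) W C → C ⊆ M → C = M}

/-- `S` is a transversal of the family `F`: it meets every member of `F`. -/
def TransversalOf {α : Type*} (S : Set α) (F : Set (Set α)) : Prop :=
  ∀ C ∈ F, (S ∩ C).Nonempty

/-- A partial pairing of `V`: a set of pairwise disjoint 2-element subsets of `V`. -/
def IsPartialPairingOn {α : Type*} (V : Set α) (P : Set (Set α)) : Prop :=
  (∀ B ∈ P, B ⊆ V ∧ B.ncard = 2) ∧
  ∀ B ∈ P, ∀ C ∈ P, B ≠ C → Disjoint B C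

/-- `I` is an interval of the totally ordered set `X`: every element of `X ∖ I` is greater
than all elements of `I` or smaller than all of them. -/
def IsIntervalOf {α : Type*} [LinearOrder α] (X I : Set α) : Prop :=
  I ⊆ X ∧ ∀ v ∈ X \ I, (∀ i ∈ I, v < i) ∨ (∀ i ∈ I, i < v)

/-- A nontrivial interval of `X`. -/
def IsNontrivialIntervalOf {α : Type*} [LinearOrder α] (X I : Set α) : Prop :=
  IsIntervalOf X I ∧ ¬ IsTrivialSubset X I

/-- A family of blocks `P` on the totally ordered set `X` is irreducible if no nontrivial
interval of `X` is a union of blocks of `P`. -/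
def IrreducibleOn {α : Type*} [LinearOrder α] (X : Set α) (P : Set (Set α)) : Prop :=
  ∀ R ⊆ P, ¬ IsNontrivialIntervalOf X (⋃₀ R)

/-- A partial quasi-pairing of `V`: a set `Q` of `m+1` two-element subsets of `V` (`m ≥ 1`)
whose union has size `2m+1`. -/
def IsPartialQuasiPairingOn {α : Type*} (V : Set α) (Q : Set (Set α)) : Prop :=
  (∀ B ∈ Q, B ⊆ V ∧ B.ncard = 2) ∧
  ∃ m : ℕ, 1 ≤ m ∧ (⋃₀ Q).ncard = 2 * m + 1 ∧ Q.ncard = m + 1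

/-- The distinguished data of a quasi-pairing `Q`: `vh = v̂_Q` is the element lying in the two
blocks `{vh, vm}` and `{vh, vp}` of `Q`, with `vm = v_Q^- < v_Q^+ = vp`. -/
def QPData {α : Type*} [LinearOrder α] (Q : Set (Set α)) (vh vm vp : α) : Prop :=
  ({vh, vm} : Set α) ∈ Q ∧ ({vh, vp} : Set α) ∈ Q ∧ vm < vp

/-- `Q_part`: the partition of `⋃₀ Q` obtained from `Q` by merging its two intersecting
blocks into `B_Q = {v̂_Q, v_Q^-, v_Q^+}`. -/
def QPart {α : Type*} [LinearOrder α] (Q : Set (Set α)) (vh vm vp : α) : Set (Set α) :=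
  (Q \ {({vh, vm} : Set α), ({vh, vp} : Set α)}) ∪ {({vh, vm, vp} : Set α)}

/-- Let `n ≥ 3`, `V = {0, …, n−1}`, and `Q` a partial quasi-pairing of
`V` with distinguished data `(vh, vm, vp)`. If there is `v ∈ V` with `{v, v+1} ∈ Q` and
`v̂_Q ∉ {v, v+1}`, then `{v, v+1}` is a nontrivial module of `Inv(underline(n), Q)`;
in particular, `Inv(underline(n), Q)` is decomposable. -/
lemma sUnion_ncard_le : ∀ (Q : Set (Set ℕ)), Q.Finite → (∀ B ∈ Q, B.ncard ≤ 2) →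
    (⋃₀ Q).ncard ≤ 2 * Q.ncard := by
  intro Q hfin
  refine Set.Finite.induction_on (motive := fun Q _ => (∀ B ∈ Q, B.ncard ≤ 2) → (⋃₀ Q).ncard ≤ 2 * Q.ncard) Q hfin ?_ ?_
  · simp
  · intro a s ha hs ih h2
    rw [Set.sUnion_insert, Set.ncard_insert_of_notMem ha hs]
    have h2' : ∀ B ∈ s, B.ncard ≤ 2 := fun B hB => h2 B (Set.mem_insert_of_mem _ hB)
    have := ih h2'
    have ha2 : a.ncard ≤ 2 := h2 a (Set.mem_insert _ _)
    calc (a ∪ ⋃₀ s).ncard ≤ a.ncard + (⋃₀ s).ncard := Set.ncard_union_le _ _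
    _ ≤ 2 * (s.ncard + 1) := by omega

lemma pair_eq_of_mem {C : Set ℕ} (h2 : C.ncard = 2) {x y : ℕ} (hx : x ∈ C) (hy : y ∈ C)
    (hxy : x ≠ y) : C = {x, y} := by
  have hfin : C.Finite := Set.finite_of_ncard_ne_zero (by omega)
  have hsub : ({x, y} : Set ℕ) ⊆ C := by
    intro z hz; rcases hz with rfl | rfl; exacts [hx, hy]
  have hcard : ({x, y} : Set ℕ).ncard = 2 := Set.ncard_pair hxy
  exact (Set.eq_of_subset_of_ncard_le hsub (by omega) hfin).symm

lemma caseA (Q : Set (Set ℕ)) (m : ℕ) (hfin : Q.Finite)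
    (h2 : ∀ B ∈ Q, B.ncard = 2) (hU : (⋃₀ Q).ncard = 2 * m + 1) (hQc : Q.ncard = m + 1)
    (x vh : ℕ) (hx : x ≠ vh) (D Bx Bv : Set ℕ) (hD : D ∈ Q) (hBx : Bx ∈ Q) (hBv : Bv ∈ Q)
    (hxD : x ∈ D) (hvD : vh ∈ D) (hBxD : Bx ≠ D) (hBvD : Bv ≠ D)
    (hxBx : x ∈ Bx) (hvBv : vh ∈ Bv) : False := by
  have hDeq : D = {x, vh} := pair_eq_of_mem (h2 D hD) hxD hvD hx
  have hsub : ⋃₀ Q ⊆ ⋃₀ (Q \ {D}) := by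
    intro z hz
    obtain ⟨E, hE, hzE⟩ := hz
    by_cases hED : E = D
    · subst hED
      rw [hDeq] at hzE
      rcases hzE with rfl | rfl
      · exact ⟨Bx, ⟨hBx, hBxD⟩, hxBx⟩
      · exact ⟨Bv, ⟨hBv, hBvD⟩, hvBv⟩
    · exact ⟨E, ⟨hE, hED⟩, hzE⟩
  have hcard : (Q \ {D}).ncard = m := by
    have := Set.ncard_diff_singleton_of_mem hD
    omega
  have hle : (⋃₀ (Q \ {D})).ncard ≤ 2 * m := by
    have := sUnion_ncard_le (Q \ {D}) (hfin.diff)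
      (fun B hB => le_of_eq (h2 B hB.1))
    omega
  have := Set.ncard_le_ncard hsub ((hfin.diff).sUnion
    (fun B hB => Set.finite_of_ncard_ne_zero (by rw [h2 B hB.1]; omega)))
  omega

lemma unique_block (Q : Set (Set ℕ)) (m : ℕ) (hm : 1 ≤ m) (hfin : Q.Finite)
    (h2 : ∀ B ∈ Q, B.ncard = 2) (hU : (⋃₀ Q).ncard = 2 * m + 1) (hQc : Q.ncard = m + 1)
    (B0 C0 : Set ℕ) (hB0 : B0 ∈ Q) (hC0 : C0 ∈ Q) (hne : B0 ≠ C0) (vh : ℕ)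
    (hvB0 : vh ∈ B0) (hvC0 : vh ∈ C0)
    (x : ℕ) (hx : x ≠ vh) (B C : Set ℕ) (hB : B ∈ Q) (hC : C ∈ Q)
    (hxB : x ∈ B) (hxC : x ∈ C) : B = C := by
  by_contra hBC
  have hfinB : ∀ E ∈ Q, E.Finite :=
    fun E hE => Set.finite_of_ncard_ne_zero (by rw [h2 E hE]; omega)
  by_cases hBB0 : B = B0
  · subst hBB0
    exact caseA Q m hfin h2 hU hQc x vh hx B C C0 hB hC hC0 hxB hvB0
      (fun h => hBC h.symm) (Ne.symm hne) hxC hvC0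
  by_cases hBC0 : B = C0
  · subst hBC0
    exact caseA Q m hfin h2 hU hQc x vh hx B C B0 hB hC hB0 hxB hvC0
      (fun h => hBC h.symm) hne hxC hvB0
  by_cases hCB0 : C = B0
  · subst hCB0
    exact caseA Q m hfin h2 hU hQc x vh hx C B C0 hC hB hC0 hxC hvB0
      hBC (Ne.symm hne) hxB hvC0
  by_cases hCC0 : C = C0
  · subst hCC0
    exact caseA Q m hfin h2 hU hQc x vh hx C B B0 hC hB hB0 hxC hvC0
      hBC hne hxB hvB0
  -- all four distinct
  set Q'' := Q \ {C, C0} with hQ''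
  have hCCne : C ≠ C0 := hCC0
  have hBQ'' : B ∈ Q'' := ⟨hB, by simp [hBC, hBC0]⟩
  have hB0Q'' : B0 ∈ Q'' := ⟨hB0, by simp [Ne.symm hCB0, hne]⟩
  have hsub : ⋃₀ Q ⊆ ⋃₀ Q'' ∪ ((C \ {x}) ∪ (C0 \ {vh})) := by
    intro z hz
    obtain ⟨E, hE, hzE⟩ := hz
    by_cases hEC : E = C
    · subst hEC
      by_cases hzx : z = x
      · exact Or.inl ⟨B, hBQ'', hzx ▸ hxB⟩
      · exact Or.inr (Or.inl ⟨hzE, hzx⟩)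
    by_cases hEC0 : E = C0
    · subst hEC0
      by_cases hzv : z = vh
      · exact Or.inl ⟨B0, hB0Q'', hzv ▸ hvB0⟩
      · exact Or.inr (Or.inr ⟨hzE, hzv⟩)
    · exact Or.inl ⟨E, ⟨hE, by simp [hEC, hEC0]⟩, hzE⟩
  have hQ''card : Q''.ncard = m - 1 := by
    rw [hQ'', Set.ncard_diff
      (show ({C, C0} : Set (Set ℕ)) ⊆ Q by intro z hz; rcases hz with rfl | rfl; exacts [hC, hC0])
      (Set.toFinite _), Set.ncard_pair hCCne, hQc]
    omega
  have hCx : (C \ {x}).ncard = 1 := by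
    rw [Set.ncard_diff_singleton_of_mem hxC, h2 C hC]
  have hC0v : (C0 \ {vh}).ncard = 1 := by
    rw [Set.ncard_diff_singleton_of_mem hvC0, h2 C0 hC0]
  have hle : (⋃₀ Q'').ncard ≤ 2 * (m - 1) := by
    have := sUnion_ncard_le Q'' (hfin.diff) (fun B hB => le_of_eq (h2 B hB.1))
    omega
  have hfinU : (⋃₀ Q'' ∪ ((C \ {x}) ∪ (C0 \ {vh}))).Finite := by
    refine Set.Finite.union ((hfin.diff).sUnion (fun E hE => hfinB E hE.1)) ?_
    exact Set.Finite.union ((hfinB C hC).diff) ((hfinB C0 hC0).diff)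
  have h1 := Set.ncard_le_ncard hsub hfinU
  have h2' := Set.ncard_union_le (⋃₀ Q'') ((C \ {x}) ∪ (C0 \ {vh}))
  have h3 := Set.ncard_union_le (C \ {x}) (C0 \ {vh})
  omega

theorem stmt_16 (n : ℕ) (hn : 3 ≤ n) (Q : Set (Set ℕ))
    (hQ : IsPartialQuasiPairingOn (Set.Iio n) Q)
    (vh vm vp : ℕ) (hdata : QPData Q vh vm vp)
    (v : ℕ) (hv : v < n) (h1 : ({v, v + 1} : Set ℕ) ∈ Q)
    (h2 : vh ≠ v ∧ vh ≠ v + 1) :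
    IsNontrivialModuleOn Q (Set.Iio n) {v, v + 1} ∧ DecomposableOn Q (Set.Iio n) := by
  obtain ⟨hblocks, m, hm1, hUcard, hQcard⟩ := hQ
  obtain ⟨hBm, hBp, hmp⟩ := hdata
  have hfin : Q.Finite := Set.finite_of_ncard_ne_zero (by omega)
  have hB0C0 : ({vh, vm} : Set ℕ) ≠ ({vh, vp} : Set ℕ) := by
    intro h
    have h1' : vm ∈ ({vh, vp} : Set ℕ) := h ▸ (by simp : vm ∈ ({vh, vm} : Set ℕ))
    have h2' : vp ∈ ({vh, vm} : Set ℕ) := h ▸ (by simp : vp ∈ ({vh, vp} : Set ℕ))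
    simp only [Set.mem_insert_iff, Set.mem_singleton_iff] at h1' h2'
    omega
  have uniq : ∀ x : ℕ, x ≠ vh → ∀ B ∈ Q, ∀ C ∈ Q, x ∈ B → x ∈ C → B = C := by
    intro x hx B hB C hC hxB hxC
    exact unique_block Q m hm1 hfin (fun E hE => (hblocks E hE).2) hUcard hQcard
      {vh, vm} {vh, vp} hBm hBp hB0C0 vh (by simp) (by simp) x hx B C hB hC hxB hxC
  have hv1 : v + 1 < n := (hblocks _ h1).1 (by simp)
  have hvn : v ≠ vh := fun h => h2.1 h.symm
  have hv1n : v + 1 ≠ vh := fun h => h2.2 h.symm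
  have key : ∀ w : ℕ, w ∉ ({v, v + 1} : Set ℕ) →
      ({w, v} : Set ℕ) ∉ Q ∧ ({w, v + 1} : Set ℕ) ∉ Q := by
    intro w hw
    simp only [Set.mem_insert_iff, Set.mem_singleton_iff, not_or] at hw
    constructor
    · intro hmem
      have := uniq v hvn _ hmem _ h1 (by simp) (by simp)
      have : w ∈ ({v, v + 1} : Set ℕ) := this ▸ (by simp : w ∈ ({w, v} : Set ℕ))
      simp only [Set.mem_insert_iff, Set.mem_singleton_iff] at this
      omega
    · intro hmem
      have := uniq (v + 1) hv1n _ hmem _ h1 (by simp) (by simp)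
      have : w ∈ ({v, v + 1} : Set ℕ) := this ▸ (by simp : w ∈ ({w, v + 1} : Set ℕ))
      simp only [Set.mem_insert_iff, Set.mem_singleton_iff] at this
      omega
  have hmod : IsModuleOn Q (Set.Iio n) {v, v + 1} := by
    constructor
    · intro z hz
      rcases hz with rfl | hz
      · exact lt_trans (by omega) hv1
      · simp only [Set.mem_singleton_iff] at hz; exact hz ▸ hv1
    · intro w hw hwM
      obtain ⟨hwv, hwv1⟩ := key w hwM
      simp only [Set.mem_insert_iff, Set.mem_singleton_iff, not_or] at hwM
      rcases lt_or_gt_of_ne (show w ≠ v from hwM.1) with hlt | hgt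
      · left
        intro x hx
        rcases hx with rfl | hx
        · exact Or.inl ⟨hlt, hwv⟩
        · simp only [Set.mem_singleton_iff] at hx
          subst hx
          exact Or.inl ⟨by omega, hwv1⟩
      · have hgt' : v + 1 < w := by omega
        right
        intro x hx
        rcases hx with rfl | hx
        · exact Or.inl ⟨by omega, by rwa [Set.pair_comm]⟩
        · simp only [Set.mem_singleton_iff] at hx
          subst hx
          exact Or.inl ⟨hgt', by rwa [Set.pair_comm]⟩
  have hnt : ¬ IsTrivialSubset (Set.Iio n) ({v, v + 1} : Set ℕ) := by
    rintro (he | ⟨a, ha⟩ | hall)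
    · have : v ∈ ({v, v + 1} : Set ℕ) := by simp
      rw [he] at this; exact this
    · have h1' : v ∈ ({a} : Set ℕ) := ha ▸ (by simp : v ∈ ({v, v + 1} : Set ℕ))
      have h2' : v + 1 ∈ ({a} : Set ℕ) := ha ▸ (by simp : v + 1 ∈ ({v, v + 1} : Set ℕ))
      simp only [Set.mem_singleton_iff] at h1' h2'
      omega
    · have h0 : (0 : ℕ) ∈ ({v, v + 1} : Set ℕ) := hall.symm ▸ (by omega : (0:ℕ) < n)
      have h2' : (2 : ℕ) ∈ ({v, v + 1} : Set ℕ) := hall.symm ▸ (by omega : (2:ℕ) < n)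
      simp only [Set.mem_insert_iff, Set.mem_singleton_iff] at h0 h2'
      omega
  exact ⟨⟨hmod, hnt⟩, ⟨{v, v + 1}, hmod, hnt⟩⟩
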